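/- Let T be a triangulated category, N a triangulated subcategory of T, and (U, X, V) an N-localization triple of T satisfying the Verdier condition, with X closed under direct summands. Then for every morphism s: A → B with A, B ∈ U ∩ V and every distinguished triangle A →(s) B → C → A[1], the following are equivalent: (i) C ∈ N; (ii) there exists a morphism t: B → A such that 1_A − t∘s and 1_B − s∘t both factor through X. -/

import Mathlib

open CategoryTheory Category Limits Pretriangulated

universe v u

variable {T : Type u} [Category.{v} T] [HasZeroObject T] [HasShift T ℤ]
  [Preadditive T] [∀ n : ℤ, (CategoryTheory.shiftFunctor T n).Additive] [Pretriangulated T]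

namespace VerdierPaper

/-- A morphism factors through the subcategory `X`. -/
def FactorsThru (X : Set T) {A B : T} (f : A ⟶ B) : Prop :=
  ∃ (X₀ : T) (_ : X₀ ∈ X) (g : A ⟶ X₀) (h : X₀ ⟶ B), f = g ≫ h

/-- A triangulated subcategory: closed under isomorphisms, shifts in both directions,
contains a zero object, and two-out-of-three for distinguished triangles. -/
structure IsTriangulatedSub (N : Set T) : Prop where
  zero : ∃ Z ∈ N, IsZero Z
  closedIso : ∀ {A B : T}, (A ≅ B) → A ∈ N → B ∈ N
  shift : ∀ A ∈ N, (A⟦(1 : ℤ)⟧) ∈ N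
  unshift : ∀ A ∈ N, (A⟦(-1 : ℤ)⟧) ∈ N
  two_of_three₁₂ : ∀ Tr ∈ (distTriang T), Tr.obj₁ ∈ N → Tr.obj₂ ∈ N → Tr.obj₃ ∈ N
  two_of_three₂₃ : ∀ Tr ∈ (distTriang T), Tr.obj₂ ∈ N → Tr.obj₃ ∈ N → Tr.obj₁ ∈ N
  two_of_three₁₃ : ∀ Tr ∈ (distTriang T), Tr.obj₁ ∈ N → Tr.obj₃ ∈ N → Tr.obj₂ ∈ N

/-- Closed under direct summands (retracts). -/
def ClosedUnderSummands (S : Set T) : Prop :=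
  ∀ (X₀ A : T), X₀ ∈ S → ∀ (i : A ⟶ X₀) (r : X₀ ⟶ A), i ≫ r = 𝟙 A → A ∈ S

/-- `f : A ⟶ B` is `X`-monic: every morphism from `A` to an object of `X` extends along `f`. -/
def XMonic (X : Set T) {A B : T} (f : A ⟶ B) : Prop :=
  ∀ X₀ ∈ X, ∀ g : A ⟶ X₀, ∃ h : B ⟶ X₀, f ≫ h = g

/-- `f : A ⟶ B` is `X`-epic: every morphism from an object of `X` to `B` lifts along `f`. -/
def XEpic (X : Set T) {A B : T} (f : A ⟶ B) : Prop :=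
  ∀ X₀ ∈ X, ∀ g : X₀ ⟶ B, ∃ h : X₀ ⟶ A, h ≫ f = g

/-- An `X`-preenvelope: an `X`-monic with target in `X`. -/
def Preenvelope (X : Set T) {A X₀ : T} (f : A ⟶ X₀) : Prop :=
  X₀ ∈ X ∧ XMonic X f

/-- An `X`-precover: an `X`-epic with source in `X`. -/
def Precover (X : Set T) {X₀ B : T} (f : X₀ ⟶ B) : Prop :=
  X₀ ∈ X ∧ XEpic X f

/-- `U^{⊥,X}`: objects such that every morphism from an object of `U` factors through `X`. -/
def perpRightX (U X : Set T) : Set T :=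
  {W | ∀ U₀ ∈ U, ∀ f : U₀ ⟶ W, FactorsThru X f}

/-- `^{X,⊥}V`: objects such that every morphism to an object of `V` factors through `X`. -/
def perpLeftX (X V : Set T) : Set T :=
  {W | ∀ V₀ ∈ V, ∀ f : W ⟶ V₀, FactorsThru X f}

/-- A localization triple `(U, X, V)` of `T`. Triangles `A[-1] → W → Q → A` are
recorded in the rotated form `W → Q → A → W[1]`. -/
structure IsLocalizationTriple (U X V : Set T) : Prop where
  subU : X ⊆ U
  subV : X ⊆ V
  precover : ∀ A : T, ∃ (W Q : T) (w : W ⟶ Q) (r : Q ⟶ A) (d : A ⟶ W⟦(1 : ℤ)⟧),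
    Triangle.mk w r d ∈ (distTriang T) ∧ Precover U r ∧ W ∈ perpRightX U X
  preenvelope : ∀ A : T, ∃ (R W : T) (j : A ⟶ R) (t : R ⟶ W) (d : W ⟶ A⟦(1 : ℤ)⟧),
    Triangle.mk j t d ∈ (distTriang T) ∧ Preenvelope V j ∧ W ∈ perpLeftX X V
  precoverV : ∀ A ∈ V, ∃ (W Q : T) (w : W ⟶ Q) (r : Q ⟶ A) (d : A ⟶ W⟦(1 : ℤ)⟧),
    Triangle.mk w r d ∈ (distTriang T) ∧ Precover U r ∧ W ∈ perpRightX U X ∧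
    Q ∈ U ∩ V ∧ W ∈ V ∧ W ∈ perpRightX (U ∩ V) X
  preenvelopeU : ∀ A ∈ U, ∃ (R W : T) (j : A ⟶ R) (t : R ⟶ W) (d : W ⟶ A⟦(1 : ℤ)⟧),
    Triangle.mk j t d ∈ (distTriang T) ∧ Preenvelope V j ∧ W ∈ perpLeftX X V ∧
    R ∈ U ∩ V ∧ W ∈ U ∧ W ∈ perpLeftX X (U ∩ V)

/-- An `N`-localization triple. -/
structure IsNLocalizationTriple (N U X V : Set T) extends IsLocalizationTriple U X V : Prop where
  xEq : X = U ∩ V ∩ N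
  perpR_subset : perpRightX U X ⊆ N
  perpL_subset : perpLeftX X V ⊆ N

/-- The Verdier condition for an `N`-localization triple. -/
def VerdierCondition (N U X V : Set T) : Prop :=
  ∀ (A B N₀ : T) (s : A ⟶ B) (g : B ⟶ N₀) (h : N₀ ⟶ A⟦(1 : ℤ)⟧),
    Triangle.mk s g h ∈ (distTriang T) → A ∈ U ∩ V → B ∈ U ∩ V → N₀ ∈ N →
    ∃ t : B ⟶ A, FactorsThru X (𝟙 A - s ≫ t) ∧ FactorsThru X (𝟙 B - t ≫ s)

section Helpers
set_option linter.unusedSectionVars false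

variable {N U X V : Set T}

lemma FactorsThru.pre {S : Set T} {A B P : T} {f : A ⟶ B} (hf : FactorsThru S f)
    (e : P ⟶ A) : FactorsThru S (e ≫ f) := by
  obtain ⟨M, hM, u, v, rfl⟩ := hf
  exact ⟨M, hM, e ≫ u, v, by simp⟩

lemma FactorsThru.post {S : Set T} {A B P : T} {f : A ⟶ B} (hf : FactorsThru S f)
    (e : B ⟶ P) : FactorsThru S (f ≫ e) := by
  obtain ⟨M, hM, u, v, rfl⟩ := hf
  exact ⟨M, hM, u, v ≫ e, by simp⟩

lemma FactorsThru.mono {S S' : Set T} (hSS' : S ⊆ S') {A B : T} {f : A ⟶ B}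
    (hf : FactorsThru S f) : FactorsThru S' f := by
  obtain ⟨M, hM, u, v, rfl⟩ := hf
  exact ⟨M, hSS' hM, u, v, rfl⟩

lemma biprod_mem (hN : IsTriangulatedSub N) {A B : T} (hA : A ∈ N) (hB : B ∈ N) :
    (A ⊞ B) ∈ N :=
  hN.two_of_three₁₃ _ (binaryBiproductTriangle_distinguished A B) hA hB

lemma FactorsThru.add (hN : IsTriangulatedSub N) {A B : T} {f g : A ⟶ B}
    (hf : FactorsThru N f) (hg : FactorsThru N g) : FactorsThru N (f + g) := by
  obtain ⟨M₁, hM₁, u₁, v₁, rfl⟩ := hf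
  obtain ⟨M₂, hM₂, u₂, v₂, rfl⟩ := hg
  exact ⟨M₁ ⊞ M₂, biprod_mem hN hM₁ hM₂, biprod.lift u₁ u₂, biprod.desc v₁ v₂, by
    rw [biprod.lift_desc]⟩

lemma X_subset_N (hLoc : IsNLocalizationTriple N U X V) : X ⊆ N := by
  intro x hx
  rw [hLoc.xEq] at hx
  exact hx.2

/-- Extraction lemma: a morphism from an object of `U` to an object of `V` which factors
through `N` actually factors through `X`. -/
lemma factorsThru_X_of_N (hN : IsTriangulatedSub N) (hLoc : IsNLocalizationTriple N U X V)
    {P Z : T} (hP : P ∈ U) (hZ : Z ∈ V) {f : P ⟶ Z} (hf : FactorsThru N f) :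
    FactorsThru X f := by
  obtain ⟨M, hM, f₁, f₂, rfl⟩ := hf
  obtain ⟨W₃, Q₃, w₃, r₃, d₃, hT₅, ⟨hQ₃U, hr₃⟩, hW₃⟩ := hLoc.precover M
  have hQ₃N : Q₃ ∈ N := hN.two_of_three₁₃ _ hT₅ (hLoc.perpR_subset hW₃) hM
  obtain ⟨R₃, W₄, j₃, t₃, d₄, hT₆, ⟨hR₃V, hj₃⟩, hW₄, hR₃UV, _, _⟩ := hLoc.preenvelopeU Q₃ hQ₃U
  have hR₃N : R₃ ∈ N := hN.two_of_three₁₃ _ hT₆ hQ₃N (hLoc.perpL_subset hW₄)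
  have hR₃X : R₃ ∈ X := by rw [hLoc.xEq]; exact ⟨hR₃UV, hR₃N⟩
  obtain ⟨ψ₁, hψ₁⟩ := hr₃ P hP f₁
  obtain ⟨ψ₂, hψ₂⟩ := hj₃ Z hZ (r₃ ≫ f₂)
  exact ⟨R₃, hR₃X, ψ₁ ≫ j₃, ψ₂, by rw [assoc, hψ₂, ← assoc, hψ₁]⟩

/-- If the identity of `D` factors through `N`, then `D ∈ N`. -/
lemma mem_N_of_id_factorsThru (hN : IsTriangulatedSub N)
    (hLoc : IsNLocalizationTriple N U X V) (hXsumm : ClosedUnderSummands X)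
    {D : T} (hD : FactorsThru N (𝟙 D)) : D ∈ N := by
  obtain ⟨M, hM, n₁, n₂, hn⟩ := hD
  -- precover of D
  obtain ⟨W₁, Q₁, w₁, r₁, δ₁, hT₂, ⟨hQ₁U, hr₁⟩, hW₁⟩ := hLoc.precover D
  have hW₁N : W₁ ∈ N := hLoc.perpR_subset hW₁
  -- κ-trick to show 𝟙 Q₁ factors through N
  obtain ⟨W₃, Q₃, w₃, r₃, δ₃, hT₅, ⟨hQ₃U, hr₃⟩, hW₃⟩ := hLoc.precover M
  have hQ₃N : Q₃ ∈ N := hN.two_of_three₁₃ _ hT₅ (hLoc.perpR_subset hW₃) hM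
  obtain ⟨σ', hσ'⟩ := hr₃ Q₁ hQ₁U (r₁ ≫ n₁)
  obtain ⟨ρ', hρ'⟩ := hr₁ Q₃ hQ₃U (r₃ ≫ n₂)
  have hκ : (σ' ≫ ρ') ≫ r₁ = r₁ := by
    rw [assoc, hρ', ← assoc, hσ', assoc, ← hn, comp_id]
  obtain ⟨χ, hχ⟩ := Triangle.coyoneda_exact₂ _ hT₂ (𝟙 Q₁ - σ' ≫ ρ')
    (by
      show (𝟙 Q₁ - σ' ≫ ρ') ≫ r₁ = 0
      rw [Preadditive.sub_comp, hκ, id_comp, sub_self])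
  simp only [Triangle.mk_mor₁] at hχ
  have hQ₁id : FactorsThru N (𝟙 Q₁) := by
    have : 𝟙 Q₁ = (σ' ≫ ρ') + χ ≫ w₁ := by erw [← hχ]; abel
    rw [this]
    exact FactorsThru.add hN ⟨Q₃, hQ₃N, σ', ρ', rfl⟩ ⟨W₁, hW₁N, χ, w₁, rfl⟩
  -- preenvelopeU of Q₁
  obtain ⟨R₁, W₂, j₁, τ₁, δ₂, hT₃, ⟨hR₁V, hj₁⟩, hW₂pl, hR₁UV, _, hW₂plUV⟩ :=
    hLoc.preenvelopeU Q₁ hQ₁U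
  have hW₂N : W₂ ∈ N := hLoc.perpL_subset hW₂pl
  -- dual κ-trick for R₁
  obtain ⟨M', hM', n₁', n₂', hn'⟩ := hQ₁id
  obtain ⟨R₅, W₅, j₅, τ₅, δ₅, hT₆, ⟨hR₅V, hj₅⟩, hW₅⟩ := hLoc.preenvelope M'
  have hR₅N : R₅ ∈ N := hN.two_of_three₁₃ _ hT₆ hM' (hLoc.perpL_subset hW₅)
  obtain ⟨ν', hν'⟩ := hj₅ R₁ hR₁V (n₂' ≫ j₁)
  obtain ⟨θ', hθ'⟩ := hj₁ R₅ hR₅V (n₁' ≫ j₅)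
  have hκ' : j₁ ≫ (θ' ≫ ν') = j₁ := by
    rw [← assoc, hθ', assoc, hν', ← assoc, ← hn', id_comp]
  obtain ⟨ψ, hψ⟩ := Triangle.yoneda_exact₂ _ hT₃ (𝟙 R₁ - θ' ≫ ν')
    (by
      show j₁ ≫ (𝟙 R₁ - θ' ≫ ν') = 0
      rw [Preadditive.comp_sub, hκ', comp_id, sub_self])
  simp only [Triangle.mk_mor₂] at hψ
  have hψX : FactorsThru X ψ := hW₂plUV R₁ hR₁UV ψ
  have hR₁id : FactorsThru N (𝟙 R₁) := by
    have : 𝟙 R₁ = (θ' ≫ ν') + τ₁ ≫ ψ := by erw [← hψ]; abel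
    rw [this]
    exact FactorsThru.add hN ⟨R₅, hR₅N, θ', ν', rfl⟩
      ((hψX.mono (X_subset_N hLoc)).pre τ₁)
  -- R₁ ∈ X by extraction + summands
  have hR₁idX : FactorsThru X (𝟙 R₁) := factorsThru_X_of_N hN hLoc hR₁UV.1 hR₁UV.2 hR₁id
  obtain ⟨X₆, hX₆, i, p, hip⟩ := hR₁idX
  have hR₁X : R₁ ∈ X := hXsumm X₆ R₁ hX₆ i p hip.symm
  have hR₁N : R₁ ∈ N := by rw [hLoc.xEq] at hR₁X; exact hR₁X.2
  have hQ₁N : Q₁ ∈ N := hN.two_of_three₂₃ _ hT₃ hR₁N hW₂N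
  exact hN.two_of_three₁₂ _ hT₂ hW₁N hQ₁N

end Helpers


section SumTriangle
set_option linter.unusedSectionVars false

/-- The binary direct sum of two triangles. -/
noncomputable abbrev sumTriangle (T₁ T₂ : Triangle T) : Triangle T :=
  ⟨T₁.obj₁ ⊞ T₂.obj₁, T₁.obj₂ ⊞ T₂.obj₂, T₁.obj₃ ⊞ T₂.obj₃,
    (biprod.map T₁.mor₁ T₂.mor₁), (biprod.map T₁.mor₂ T₂.mor₂),
    (biprod.desc (T₁.mor₃ ≫ (biprod.inl : T₁.obj₁ ⟶ T₁.obj₁ ⊞ T₂.obj₁)⟦(1:ℤ)⟧')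
      (T₂.mor₃ ≫ (biprod.inr : T₂.obj₁ ⟶ T₁.obj₁ ⊞ T₂.obj₁)⟦(1:ℤ)⟧'))⟩

lemma shift_biprod_ext {W P Q : T} {u : W ⟶ (P ⊞ Q)⟦(1:ℤ)⟧}
    (h1 : u ≫ (biprod.fst : P ⊞ Q ⟶ P)⟦(1:ℤ)⟧' = 0)
    (h2 : u ≫ (biprod.snd : P ⊞ Q ⟶ Q)⟦(1:ℤ)⟧' = 0) : u = 0 := by
  have : u = u ≫ (𝟙 (P ⊞ Q))⟦(1:ℤ)⟧' := by simp
  rw [this, ← biprod.total, Functor.map_add, Preadditive.comp_add,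
    Functor.map_comp, Functor.map_comp, ← assoc, ← assoc, h1, h2, zero_comp, zero_comp, add_zero]

lemma sumTriangle_mor₃_comp_fst (T₁ T₂ : Triangle T) :
    (sumTriangle T₁ T₂).mor₃ ≫ (biprod.fst : T₁.obj₁ ⊞ T₂.obj₁ ⟶ _)⟦(1:ℤ)⟧'
      = biprod.fst ≫ T₁.mor₃ := by
  apply biprod.hom_ext' <;> simp [sumTriangle, assoc, ← Functor.map_comp]

lemma sumTriangle_mor₃_comp_snd (T₁ T₂ : Triangle T) :
    (sumTriangle T₁ T₂).mor₃ ≫ (biprod.snd : T₁.obj₁ ⊞ T₂.obj₁ ⟶ _)⟦(1:ℤ)⟧'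
      = biprod.snd ≫ T₂.mor₃ := by
  apply biprod.hom_ext' <;> simp [sumTriangle, assoc, ← Functor.map_comp]

lemma sumTriangle_distinguished (T₁ T₂ : Triangle T) (h₁ : T₁ ∈ distTriang T)
    (h₂ : T₂ ∈ distTriang T) : sumTriangle T₁ T₂ ∈ distTriang T := by
  obtain ⟨Z, f₂, f₃, hT'⟩ := distinguished_cocone_triangle (biprod.map T₁.mor₁ T₂.mor₁)
  obtain ⟨c₁, hc₁₂, hc₁₃⟩ := complete_distinguished_triangle_morphism _ T₁ hT' h₁
    biprod.fst biprod.fst (biprod.map_fst _ _)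
  obtain ⟨c₂, hc₂₂, hc₂₃⟩ := complete_distinguished_triangle_morphism _ T₂ hT' h₂
    biprod.snd biprod.snd (biprod.map_snd _ _)
  simp only [Triangle.mk_mor₂, Triangle.mk_mor₃] at hc₁₂ hc₁₃ hc₂₂ hc₂₃
  change Z ⟶ T₁.obj₃ at c₁
  change Z ⟶ T₂.obj₃ at c₂
  replace hc₁₂ : f₂ ≫ c₁ = biprod.fst ≫ T₁.mor₂ := hc₁₂
  replace hc₂₂ : f₂ ≫ c₂ = biprod.snd ≫ T₂.mor₂ := hc₂₂
  replace hc₁₃ : f₃ ≫ (biprod.fst : T₁.obj₁ ⊞ T₂.obj₁ ⟶ _)⟦(1:ℤ)⟧' = c₁ ≫ T₁.mor₃ := hc₁₃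
  replace hc₂₃ : f₃ ≫ (biprod.snd : T₁.obj₁ ⊞ T₂.obj₁ ⟶ _)⟦(1:ℤ)⟧' = c₂ ≫ T₂.mor₃ := hc₂₃
  -- hc₁₂ : f₂ ≫ c₁ = biprod.fst ≫ T₁.mor₂
  -- hc₁₃ : f₃ ≫ (biprod.fst)⟦1⟧' = c₁ ≫ T₁.mor₃
  have comm₂ : f₂ ≫ biprod.lift c₁ c₂ = biprod.map T₁.mor₂ T₂.mor₂ := by
    apply biprod.hom_ext
    · erw [assoc, biprod.lift_fst, hc₁₂, biprod.map_fst]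
    · erw [assoc, biprod.lift_snd, hc₂₂, biprod.map_snd]
  have comm₃ : f₃ = biprod.lift c₁ c₂ ≫ (sumTriangle T₁ T₂).mor₃ := by
    change f₃ = biprod.lift c₁ c₂ ≫ (biprod.desc (T₁.mor₃ ≫ (biprod.inl :
        T₁.obj₁ ⟶ T₁.obj₁ ⊞ T₂.obj₁)⟦(1:ℤ)⟧') (T₂.mor₃ ≫ (biprod.inr :
        T₂.obj₁ ⟶ T₁.obj₁ ⊞ T₂.obj₁)⟦(1:ℤ)⟧') : T₁.obj₃ ⊞ T₂.obj₃ ⟶ _)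
    rw [biprod.desc_eq]
    rw [Preadditive.comp_add, biprod.lift_fst_assoc, biprod.lift_snd_assoc,
      ← assoc c₁ T₁.mor₃, ← hc₁₃, ← assoc c₂ T₂.mor₃, ← hc₂₃,
      assoc, assoc, ← Functor.map_comp, ← Functor.map_comp, ← Preadditive.comp_add,
      ← Functor.map_add, biprod.total]
    simp
  let ψ : Triangle.mk (biprod.map T₁.mor₁ T₂.mor₁) f₂ f₃ ⟶ sumTriangle T₁ T₂ :=
    Triangle.homMk _ _ (𝟙 _) (𝟙 _) (biprod.lift c₁ c₂)
      ((comp_id _).trans (id_comp _).symm) (comm₂.trans (id_comp _).symm)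
      ((congrArg (f₃ ≫ ·) (CategoryTheory.Functor.map_id _ _)).trans ((comp_id _).trans comm₃))
  have hψ₃ : ψ.hom₃ = biprod.lift c₁ c₂ := rfl
  have hmono : ∀ (A : T) (f : A ⟶ Z), f ≫ biprod.lift c₁ c₂ = 0 → f = 0 := by
    intro A f hf
    have hf₁ : f ≫ c₁ = 0 := by
      have : f ≫ biprod.lift c₁ c₂ ≫ biprod.fst = 0 := by rw [← assoc, hf, zero_comp]
      simpa using this
    have hf₂ : f ≫ c₂ = 0 := by
      have : f ≫ biprod.lift c₁ c₂ ≫ biprod.snd = 0 := by rw [← assoc, hf, zero_comp]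
      simpa using this
    have hfm : f ≫ f₃ = 0 := by
      apply shift_biprod_ext
      · rw [assoc, hc₁₃, ← assoc, hf₁, zero_comp]
      · rw [assoc, hc₂₃, ← assoc, hf₂, zero_comp]
    obtain ⟨g, hg⟩ := Triangle.coyoneda_exact₃ _ hT' f hfm
    simp only [Triangle.mk_mor₂] at hg
    change A ⟶ T₁.obj₂ ⊞ T₂.obj₂ at g
    replace hg : f = g ≫ f₂ := hg
    have hg₁ : (g ≫ biprod.fst) ≫ T₁.mor₂ = 0 := by
      rw [assoc, ← hc₁₂, ← assoc, ← hg, hf₁]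
    have hg₂ : (g ≫ biprod.snd) ≫ T₂.mor₂ = 0 := by
      rw [assoc, ← hc₂₂, ← assoc, ← hg, hf₂]
    obtain ⟨α, hα⟩ := Triangle.coyoneda_exact₂ _ h₁ _ hg₁
    obtain ⟨β, hβ⟩ := Triangle.coyoneda_exact₂ _ h₂ _ hg₂
    have hgdec : g = biprod.lift α β ≫ biprod.map T₁.mor₁ T₂.mor₁ := by
      apply biprod.hom_ext
      · rw [assoc, biprod.map_fst, ← assoc, biprod.lift_fst, ← hα]
      · rw [assoc, biprod.map_snd, ← assoc, biprod.lift_snd, ← hβ]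
    rw [hg, hgdec, assoc]
    have := comp_distTriang_mor_zero₁₂ _ hT'
    simp only [Triangle.mk_mor₁, Triangle.mk_mor₂] at this
    replace this : biprod.map T₁.mor₁ T₂.mor₁ ≫ f₂ = 0 := this
    rw [this, comp_zero]
  have : IsIso ψ.hom₃ := by
    rw [hψ₃]
    refine isIso_of_yoneda_map_bijective _ (fun A => ⟨fun a₁ a₂ ha => ?_, fun y => ?_⟩)
    · dsimp only at ha
      change A ⟶ Z at a₁ a₂
      replace ha : a₁ ≫ biprod.lift c₁ c₂ = a₂ ≫ biprod.lift c₁ c₂ := ha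
      have : (a₁ - a₂) ≫ biprod.lift c₁ c₂ = 0 := by
        rw [Preadditive.sub_comp, ha, sub_self]
      have := hmono _ _ this
      rwa [sub_eq_zero] at this
    · change A ⟶ T₁.obj₃ ⊞ T₂.obj₃ at y
      have hzero : (sumTriangle T₁ T₂).mor₃ ≫ (biprod.map T₁.mor₁ T₂.mor₁)⟦(1:ℤ)⟧' = 0 := by
        apply biprod.hom_ext'
        · rw [← assoc, show biprod.inl ≫ (sumTriangle T₁ T₂).mor₃
              = T₁.mor₃ ≫ (biprod.inl : T₁.obj₁ ⟶ _)⟦(1:ℤ)⟧' from by simp [sumTriangle]]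
          rw [assoc, ← Functor.map_comp, biprod.inl_map, Functor.map_comp, ← assoc,
            comp_distTriang_mor_zero₃₁ _ h₁, zero_comp]
          simp
        · rw [← assoc, show biprod.inr ≫ (sumTriangle T₁ T₂).mor₃
              = T₂.mor₃ ≫ (biprod.inr : T₂.obj₁ ⟶ _)⟦(1:ℤ)⟧' from by simp [sumTriangle]]
          rw [assoc, ← Functor.map_comp, biprod.inr_map, Functor.map_comp, ← assoc,
            comp_distTriang_mor_zero₃₁ _ h₂, zero_comp]
          simp
      obtain ⟨a', ha'⟩ := Triangle.coyoneda_exact₁ _ hT' (y ≫ (sumTriangle T₁ T₂).mor₃)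
        ((assoc _ _ _).trans ((congrArg (fun q => y ≫ q) hzero).trans comp_zero))
      simp only [Triangle.mk_mor₃] at ha'
      change A ⟶ Z at a'
      have hyc : y ≫ (sumTriangle T₁ T₂).mor₃ = a' ≫ f₃ := ha'
      have hb₁ : ((y - a' ≫ biprod.lift c₁ c₂) ≫ biprod.fst) ≫ T₁.mor₃ = 0 := by
        rw [Preadditive.sub_comp, Preadditive.sub_comp, assoc, assoc, assoc,
          biprod.lift_fst_assoc, ← hc₁₃, ← sumTriangle_mor₃_comp_fst T₁ T₂, ← assoc y, hyc,
          assoc, sub_self]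
      have hb₂ : ((y - a' ≫ biprod.lift c₁ c₂) ≫ biprod.snd) ≫ T₂.mor₃ = 0 := by
        rw [Preadditive.sub_comp, Preadditive.sub_comp, assoc, assoc, assoc,
          biprod.lift_snd_assoc, ← hc₂₃, ← sumTriangle_mor₃_comp_snd T₁ T₂, ← assoc y, hyc,
          assoc, sub_self]
      obtain ⟨b₁, hb₁'⟩ := Triangle.coyoneda_exact₃ _ h₁ _ hb₁
      obtain ⟨b₂, hb₂'⟩ := Triangle.coyoneda_exact₃ _ h₂ _ hb₂
      refine ⟨a' + biprod.lift b₁ b₂ ≫ f₂, ?_⟩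
      dsimp only
      change (a' + biprod.lift b₁ b₂ ≫ f₂) ≫ biprod.lift c₁ c₂ = y
      have hdec : y - a' ≫ biprod.lift c₁ c₂
          = biprod.lift b₁ b₂ ≫ biprod.map T₁.mor₂ T₂.mor₂ := by
        apply biprod.hom_ext
        · rw [assoc, biprod.map_fst, ← assoc, biprod.lift_fst, ← hb₁']
        · rw [assoc, biprod.map_snd, ← assoc, biprod.lift_snd, ← hb₂']
      rw [← comm₂, ← assoc] at hdec
      rw [Preadditive.add_comp, ← hdec]
      abel
  have : IsIso ψ := by
    apply Triangle.isIso_of_isIsos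
    · show IsIso (𝟙 _); infer_instance
    · show IsIso (𝟙 _); infer_instance
    · exact this
  exact isomorphic_distinguished _ hT' _ (asIso ψ).symm

end SumTriangle


section Main
open ZeroObject
set_option linter.unusedSectionVars false

theorem statement_8 (N U X V : Set T) (hN : IsTriangulatedSub N)
    (hLoc : IsNLocalizationTriple N U X V) (hVC : VerdierCondition N U X V)
    (hXsumm : ClosedUnderSummands X)
    (A B : T) (hA : A ∈ U ∩ V) (hB : B ∈ U ∩ V) (s : A ⟶ B)
    (C₀ : T) (g : B ⟶ C₀) (h : C₀ ⟶ A⟦(1 : ℤ)⟧)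
    (hT : Triangle.mk s g h ∈ (distTriang T)) :
    C₀ ∈ N ↔
      ∃ t : B ⟶ A, FactorsThru X (𝟙 A - s ≫ t) ∧ FactorsThru X (𝟙 B - t ≫ s) := by
  constructor
  · intro hC
    exact hVC A B C₀ s g h hT hA hB hC
  · rintro ⟨t, hEA, hEB⟩
    obtain ⟨X₀, hX₀, a, b, hab⟩ := hEA
    obtain ⟨X₁, hX₁, c, d, hcd⟩ := hEB
    have hX₀N : X₀ ∈ N := X_subset_N hLoc hX₀
    have hX₁N : X₁ ∈ N := X_subset_N hLoc hX₁
    have hkey1 : t ≫ s + c ≫ d = 𝟙 B := by rw [← hcd]; abel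
    set F : A ⊞ X₁ ⟶ B := biprod.desc s d with hF
    set σ : B ⟶ A ⊞ X₁ := biprod.lift t c with hσ
    have hσF : σ ≫ F = 𝟙 B := by rw [hσ, hF, biprod.lift_desc, hkey1]
    obtain ⟨E, p₉, q₉, hTF⟩ := distinguished_cocone_triangle F
    have hFp : F ≫ p₉ = 0 := comp_distTriang_mor_zero₁₂ _ hTF
    have hp₉ : p₉ = 0 := by rw [← id_comp p₉, ← hσF, assoc, hFp, comp_zero]
    set D := E⟦(-1:ℤ)⟧ with hD
    set ι : D ⟶ A ⊞ X₁ := (Triangle.mk F p₉ q₉).invRotate.mor₁ with hι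
    have hTι : Triangle.mk ι F (0 : B ⟶ D⟦(1:ℤ)⟧) ∈ distTriang T := by
      refine isomorphic_distinguished _ (inv_rot_of_distTriang _ hTF) _ ?_
      refine Triangle.isoMk _ _ (Iso.refl _) (Iso.refl _) (Iso.refl _) ?_ ?_ ?_
      · simp [hι]
        exact (comp_id _).trans (id_comp _).symm
      · simp
        exact (comp_id _).trans (id_comp _).symm
      · simp [hp₉]
        exact zero_comp.trans ((id_comp _).trans zero_comp).symm
    have hιF : ι ≫ F = 0 := by
      have := comp_distTriang_mor_zero₁₂ _ hTι
      exact this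
    have hmonoι : Mono ι := by
      have := Triangle.mono₁ _ hTι (by rfl)
      exact this
    obtain ⟨πD, hπD⟩ := Triangle.coyoneda_exact₂ _ hTι (𝟙 (A ⊞ X₁) - F ≫ σ)
      (by
        show (𝟙 (A ⊞ X₁) - F ≫ σ) ≫ F = 0
        rw [Preadditive.sub_comp, id_comp, assoc, hσF, comp_id, sub_self])
    simp only [Triangle.mk_mor₁] at hπD
    change A ⊞ X₁ ⟶ D at πD
    replace hπD : 𝟙 (A ⊞ X₁) - F ≫ σ = πD ≫ ι := hπD
    have hιπD : ι ≫ πD = 𝟙 D := by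
      rw [← cancel_mono ι, assoc, ← hπD, Preadditive.comp_sub, comp_id, ← assoc, hιF,
        zero_comp, sub_zero, id_comp]
    set ιA : D ⟶ A := ι ≫ biprod.fst with hιA
    set ιX : D ⟶ X₁ := ι ≫ biprod.snd with hιX
    set πA : A ⟶ D := biprod.inl ≫ πD with hπA
    set πX : X₁ ⟶ D := biprod.inr ≫ πD with hπX
    have hπAιA : πA ≫ ιA = a ≫ b := by
      rw [hπA, hιA, assoc, ← assoc πD, ← hπD, ← hab]
      rw [Preadditive.sub_comp, Preadditive.comp_sub]
      simp [hF, hσ]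
    have hkey2 : ιA ≫ s + ιX ≫ d = 0 := by
      have h1 : ι ≫ (biprod.fst ≫ s + biprod.snd ≫ d) = 0 := by
        rw [← biprod.desc_eq]; exact hιF
      rw [Preadditive.comp_add, ← assoc, ← assoc] at h1
      exact h1
    -- 𝟙 D factors through N
    have hθξ : 𝟙 D = ιA ≫ πA + ιX ≫ πX := by
      rw [hιA, hιX, hπA, hπX, assoc, assoc, ← hιπD]
      rw [← assoc biprod.fst, ← assoc biprod.snd, ← Preadditive.comp_add,
        ← Preadditive.add_comp, biprod.total, id_comp]
    have hidD : FactorsThru N (𝟙 D) := by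
      have hexp : 𝟙 D = (ιA ≫ πA) ≫ (ιA ≫ πA) + (ιA ≫ πA) ≫ (ιX ≫ πX) + ιX ≫ πX := by
        nth_rewrite 1 [hθξ]
        nth_rewrite 1 [show ιA ≫ πA = (ιA ≫ πA) ≫ 𝟙 D from (comp_id _).symm]
        rw [hθξ, Preadditive.comp_add]
      have hsq : (ιA ≫ πA) ≫ (ιA ≫ πA) = (ιA ≫ a) ≫ (b ≫ πA) := by
        rw [assoc ιA πA, ← assoc πA ιA πA, hπAιA, assoc a b πA, ← assoc ιA a]
      rw [hexp]
      refine FactorsThru.add hN (FactorsThru.add hN ?_ ?_) ?_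
      · rw [hsq]; exact ⟨X₀, hX₀N, _, _, rfl⟩
      · exact ⟨X₁, hX₁N, (ιA ≫ πA) ≫ ιX, πX, by simp only [assoc]⟩
      · exact ⟨X₁, hX₁N, ιX, πX, rfl⟩
    have hDN : D ∈ N := mem_N_of_id_factorsThru hN hLoc hXsumm hidD
    -- complete ιX to a triangle
    obtain ⟨P₁, y₁, y₂, hTP⟩ := distinguished_cocone_triangle ιX
    have hP₁N : P₁ ∈ N := hN.two_of_three₁₂ _ hTP hDN hX₁N
    -- sum triangles
    set TS1 : Triangle T := Triangle.mk (biprod.map s (𝟙 X₁)) (biprod.map g (0 : X₁ ⟶ (0:T)))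
        (biprod.desc (h ≫ (biprod.inl : A ⟶ A ⊞ X₁)⟦(1:ℤ)⟧')
          ((0 : (0:T) ⟶ X₁⟦(1:ℤ)⟧) ≫ (biprod.inr : X₁ ⟶ A ⊞ X₁)⟦(1:ℤ)⟧')) with hTS1def
    have hTS1 : TS1 ∈ distTriang T := by
      have heq : sumTriangle (Triangle.mk s g h) (contractibleTriangle X₁) = TS1 := rfl
      rw [← heq]
      exact sumTriangle_distinguished (Triangle.mk s g h) (contractibleTriangle X₁)
        hT (contractible_distinguished X₁)
    set TS2 : Triangle T := Triangle.mk (biprod.map (𝟙 B) ιX) (biprod.map (0 : B ⟶ (0:T)) y₁)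
        (biprod.desc ((0 : (0:T) ⟶ B⟦(1:ℤ)⟧) ≫ (biprod.inl : B ⟶ B ⊞ D)⟦(1:ℤ)⟧')
          (y₂ ≫ (biprod.inr : D ⟶ B ⊞ D)⟦(1:ℤ)⟧')) with hTS2def
    have hTS2 : TS2 ∈ distTriang T := by
      have heq : sumTriangle (contractibleTriangle B) (Triangle.mk ιX y₁ y₂) = TS2 := rfl
      rw [← heq]
      exact sumTriangle_distinguished (contractibleTriangle B) (Triangle.mk ιX y₁ y₂)
        (contractible_distinguished B) hTP
    -- the conjugating isomorphisms
    set Λ : A ⊞ X₁ ⟶ B ⊞ D := biprod.lift F πD with hΛ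
    set Λ' : B ⊞ D ⟶ A ⊞ X₁ := biprod.desc σ ι with hΛ'
    have hΛΛ' : Λ ≫ Λ' = 𝟙 _ := by rw [hΛ, hΛ', biprod.lift_desc, ← hπD]; abel
    have hσπD : σ ≫ πD = 0 := by
      rw [← cancel_mono ι, assoc, ← hπD, Preadditive.comp_sub, comp_id, ← assoc, hσF,
        id_comp, sub_self, zero_comp]
    have hΛ'Λ : Λ' ≫ Λ = 𝟙 _ := by
      rw [hΛ, hΛ']
      apply biprod.hom_ext'
      · apply biprod.hom_ext <;> simp [hσF, hσπD]
      · apply biprod.hom_ext <;> simp [hιF, hιπD]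
    set u₁ : B ⊞ X₁ ⟶ B ⊞ X₁ := biprod.snd ≫ d ≫ biprod.inl with hu₁
    set u₂ : B ⊞ X₁ ⟶ B ⊞ X₁ := biprod.fst ≫ c ≫ biprod.inr with hu₂
    have hu₁sq : u₁ ≫ u₁ = 0 := by simp [hu₁]
    have hu₂sq : u₂ ≫ u₂ = 0 := by simp [hu₂]
    set v₁ : B ⊞ X₁ ⟶ B ⊞ X₁ := 𝟙 _ + u₁ with hv₁
    set v₂ : B ⊞ X₁ ⟶ B ⊞ X₁ := 𝟙 _ - u₂ with hv₂
    have hv₁v₁' : v₁ ≫ (𝟙 _ - u₁) = 𝟙 _ := by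
      rw [hv₁]
      simp only [Preadditive.add_comp, Preadditive.comp_sub, id_comp, comp_id, hu₁sq, sub_zero]
      abel
    have hv₁'v₁ : (𝟙 _ - u₁) ≫ v₁ = 𝟙 _ := by
      rw [hv₁]
      simp only [Preadditive.sub_comp, Preadditive.comp_add, id_comp, comp_id, hu₁sq, add_zero]
      abel
    have hv₂v₂' : v₂ ≫ (𝟙 _ + u₂) = 𝟙 _ := by
      rw [hv₂]
      simp only [Preadditive.sub_comp, Preadditive.comp_add, id_comp, comp_id, hu₂sq, add_zero]
      abel
    have hv₂'v₂ : (𝟙 _ + u₂) ≫ v₂ = 𝟙 _ := by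
      rw [hv₂]
      simp only [Preadditive.add_comp, Preadditive.comp_sub, id_comp, comp_id, hu₂sq, sub_zero]
      abel
    -- key matrix identity
    have hliftv₁ : ∀ (P : T) (α : P ⟶ B) (β : P ⟶ X₁),
        biprod.lift α β ≫ v₁ = biprod.lift (α + β ≫ d) β := by
      intro P α β
      apply biprod.hom_ext <;>
        simp [hv₁, hu₁, Preadditive.comp_add, Preadditive.add_comp]
    have hliftv₂ : ∀ (P : T) (α : P ⟶ B) (β : P ⟶ X₁),
        biprod.lift α β ≫ v₂ = biprod.lift α (β - α ≫ c) := by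
      intro P α β
      apply biprod.hom_ext <;>
        simp [hv₂, hu₂, Preadditive.comp_sub, Preadditive.sub_comp]
    have hσS : σ ≫ biprod.map s (𝟙 X₁) = biprod.lift (t ≫ s) c := by
      apply biprod.hom_ext <;> simp [hσ]
    have hιS : ι ≫ biprod.map s (𝟙 X₁) = biprod.lift (ιA ≫ s) ιX := by
      apply biprod.hom_ext <;> simp [hιA, hιX]
    have hKey : Λ' ≫ biprod.map s (𝟙 X₁) ≫ (v₁ ≫ v₂) = biprod.map (𝟙 B) ιX := by
      apply biprod.hom_ext'
      · rw [hΛ', ← assoc, biprod.inl_desc, ← assoc, hσS, ← assoc, hliftv₁, hliftv₂]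
        rw [show t ≫ s + c ≫ d = 𝟙 B from hkey1]
        rw [show c - 𝟙 B ≫ c = 0 from by rw [id_comp, sub_self]]
        apply biprod.hom_ext <;> simp
      · rw [hΛ', ← assoc, biprod.inr_desc, ← assoc, hιS, ← assoc, hliftv₁, hliftv₂]
        rw [hkey2]
        rw [show ιX - (0 : D ⟶ B) ≫ c = ιX from by rw [zero_comp, sub_zero]]
        apply biprod.hom_ext <;> simp
    have hS2 : biprod.map s (𝟙 X₁) ≫ (v₁ ≫ v₂) = Λ ≫ biprod.map (𝟙 B) ιX := by
      rw [← hKey, ← assoc Λ Λ', hΛΛ', id_comp]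
    -- transported triangle
    set TS2' : Triangle T := Triangle.mk (biprod.map s (𝟙 X₁)) ((v₁ ≫ v₂) ≫ TS2.mor₂)
      (TS2.mor₃ ≫ Λ'⟦(1:ℤ)⟧') with hTS2'def
    have hTS2'dist : TS2' ∈ distTriang T := by
      refine isomorphic_distinguished _ hTS2 _ ?_
      refine Triangle.isoMk _ _ ⟨Λ, Λ', hΛΛ', hΛ'Λ⟩
        ⟨v₁ ≫ v₂, (𝟙 _ + u₂) ≫ (𝟙 _ - u₁), ?_, ?_⟩ (Iso.refl _) ?_ ?_ ?_
      · change (v₁ ≫ v₂) ≫ ((𝟙 (B ⊞ X₁) + u₂) ≫ (𝟙 (B ⊞ X₁) - u₁)) = 𝟙 _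
        rw [assoc, ← assoc v₂, hv₂v₂', id_comp, hv₁v₁']
      · change ((𝟙 (B ⊞ X₁) + u₂) ≫ (𝟙 (B ⊞ X₁) - u₁)) ≫ (v₁ ≫ v₂) = 𝟙 _
        rw [assoc, ← assoc (𝟙 _ - u₁), hv₁'v₁, id_comp, hv₂'v₂]
      · show biprod.map s (𝟙 X₁) ≫ (v₁ ≫ v₂) = Λ ≫ biprod.map (𝟙 B) ιX
        exact hS2
      · show ((v₁ ≫ v₂) ≫ (biprod.map (0 : B ⟶ (0:T)) y₁)) ≫ 𝟙 ((0:T) ⊞ P₁)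
          = (v₁ ≫ v₂) ≫ biprod.map (0 : B ⟶ (0:T)) y₁
        rw [comp_id]
      · show ((biprod.desc ((0 : (0:T) ⟶ B⟦(1:ℤ)⟧) ≫ (biprod.inl : B ⟶ B ⊞ D)⟦(1:ℤ)⟧')
            (y₂ ≫ (biprod.inr : D ⟶ B ⊞ D)⟦(1:ℤ)⟧')) ≫ Λ'⟦(1:ℤ)⟧') ≫ Λ⟦(1:ℤ)⟧'
          = 𝟙 ((0:T) ⊞ P₁) ≫ biprod.desc ((0 : (0:T) ⟶ B⟦(1:ℤ)⟧) ≫ (biprod.inl : B ⟶ B ⊞ D)⟦(1:ℤ)⟧')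
            (y₂ ≫ (biprod.inr : D ⟶ B ⊞ D)⟦(1:ℤ)⟧')
        rw [assoc, ← Functor.map_comp, hΛ'Λ, CategoryTheory.Functor.map_id, comp_id, id_comp]
    -- compare with the sum of the original triangle and a contractible one
    obtain ⟨w, hw₂, hw₃⟩ := complete_distinguished_triangle_morphism TS1 TS2'
      hTS1 hTS2'dist (𝟙 _) (𝟙 _) (by
        show biprod.map s (𝟙 X₁) ≫ 𝟙 (B ⊞ X₁) = 𝟙 (A ⊞ X₁) ≫ biprod.map s (𝟙 X₁)
        rw [comp_id, id_comp])
    have hwiso : IsIso w := by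
      have := isIso₃_of_isIso₁₂
        (Triangle.homMk TS1 TS2' (𝟙 _) (𝟙 _) w (by
          show biprod.map s (𝟙 X₁) ≫ 𝟙 (B ⊞ X₁) = 𝟙 (A ⊞ X₁) ≫ biprod.map s (𝟙 X₁)
          rw [comp_id, id_comp]) hw₂ hw₃)
        hTS1 hTS2'dist (by show IsIso (𝟙 _); infer_instance) (by show IsIso (𝟙 _); infer_instance)
      exact this
    -- conclude
    have h0N : (0 : T) ∈ N := by
      obtain ⟨Z₀, hZ₀, hzero⟩ := hN.zero
      exact hN.closedIso hzero.isoZero hZ₀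
    have hZP : ((0 : T) ⊞ P₁) ∈ N := biprod_mem hN h0N hP₁N
    have hCsum : (C₀ ⊞ (0 : T)) ∈ N := by
      have e : ((0 : T) ⊞ P₁) ≅ (C₀ ⊞ (0 : T)) := (asIso w).symm
      exact hN.closedIso e hZP
    have e2 : (C₀ ⊞ (0 : T)) ≅ C₀ := (isoBiprodZero (isZero_zero T)).symm
    exact hN.closedIso e2 hCsum

end Main

end VerdierPaper
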